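/- For strings P and T over an alphabet Σ, with |P| ≤ |T|, and for every index i with |P| - 1 ≤ i < |T|, the cross-correlation satisfies [T ⊗ P](i) = |P| - HAM(P, T[i-|P|+1 .. i]), where HAM denotes the Hamming distance. -/

import Mathlib

open Function

/-- Hamming distance between (prefixes of) lists: number of aligned mismatches. -/
def hamL {α : Type*} [DecidableEq α] (A B : List α) : ℕ :=
  ((List.range A.length).filter (fun i => A[i]? ≠ B[i]?)).length

/-- Substring T[a .. b] (inclusive) with integer indices. -/
def substr {α : Type*} (T : List α) (a b : ℤ) : List α :=
  (T.drop a.toNat).take (b - a + 1).toNat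

/-- Characteristic function of a string and a character. -/
def charFn {α : Type*} [DecidableEq α] (X : List α) (c : α) : ℤ → ℤ :=
  fun i => if 0 ≤ i ∧ X[i.toNat]? = some c then 1 else 0

/-- Convolution of two (finitely supported) functions ℤ → ℤ. -/
noncomputable def conv (f g : ℤ → ℤ) : ℤ → ℤ := fun i => ∑ᶠ j : ℤ, f j * g (i - j)

/-- Cross-correlation of two strings. -/
noncomputable def cross {α : Type*} [Fintype α] [DecidableEq α] (X Y : List α) : ℤ → ℤ :=
  fun i => ∑ c : α, conv (charFn X c) (charFn Y.reverse c) i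

/-- Backward difference of `f` due to `ρ`. -/
def bdiff (ρ : ℤ) (f : ℤ → ℤ) : ℤ → ℤ := fun i => f i - f (i - ρ)

/-- `ρ` is a `d`-period of `X`: HAM(X[0..n-ρ-1], X[ρ..n-1]) ≤ d. -/
def isPeriodL {α : Type*} [DecidableEq α] (X : List α) (ρ d : ℕ) : Prop :=
  hamL (X.take (X.length - ρ)) (X.drop ρ) ≤ d

theorem stmt0 {α : Type*} [Fintype α] [DecidableEq α]
    (P T : List α) (hlen : P.length ≤ T.length)
    (i : ℤ) (hi1 : (P.length : ℤ) - 1 ≤ i) (hi2 : i < T.length) :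
    cross T P i
      = (P.length : ℤ) - (hamL P (substr T (i - P.length + 1) i) : ℤ) := by
  classical
  set m := P.length with hm
  set a : ℤ := i - m + 1 with ha
  have ha0 : 0 ≤ a := by omega
  -- Step 1: each convolution is a finite sum over Icc a i
  have hconv : ∀ c : α, conv (charFn T c) (charFn P.reverse c) i
      = ∑ j ∈ Finset.Icc a i, charFn T c j * charFn P.reverse c (i - j) := by
    intro c
    apply finsum_eq_sum_of_support_subset
    intro j hj
    simp only [Function.mem_support, Ne, mul_eq_zero, not_or] at hj
    obtain ⟨h1, h2⟩ := hj
    simp only [charFn, ite_eq_right_iff, not_forall] at h1 h2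
    obtain ⟨⟨hj0, _⟩, _⟩ := h1
    obtain ⟨⟨hij0, hrev⟩, _⟩ := h2
    have hlt : (i - j).toNat < P.reverse.length := by
      by_contra h
      rw [List.getElem?_eq_none (by omega)] at hrev
      exact absurd hrev (by simp)
    simp only [List.length_reverse] at hlt
    simp only [Finset.coe_Icc, Set.mem_Icc]
    omega
  -- Step 2: swap sums and evaluate pointwise
  have key : cross T P i
      = ∑ j ∈ Finset.Icc a i, if T[j.toNat]? = P[(j - a).toNat]? then (1:ℤ) else 0 := by
    simp only [cross]
    rw [Finset.sum_congr rfl (fun c _ => hconv c), Finset.sum_comm]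
    refine Finset.sum_congr rfl fun j hj => ?_
    simp only [Finset.mem_Icc] at hj
    obtain ⟨hja, hji⟩ := hj
    have hjT : j.toNat < T.length := by omega
    have hjP : (j - a).toNat < m := by omega
    have hT : T[j.toNat]? = some (T[j.toNat]'hjT) := List.getElem?_eq_getElem hjT
    have hrevlen : (i - j).toNat < P.length := by omega
    have hPrev : P.reverse[(i - j).toNat]? = P[(j - a).toNat]? := by
      rw [List.getElem?_reverse hrevlen]
      congr 1
      omega
    have hP : P[(j - a).toNat]? = some (P[(j - a).toNat]'hjP) := List.getElem?_eq_getElem hjP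
    simp only [charFn, hPrev, hT, hP]
    have h0j : 0 ≤ j := by omega
    have h0ij : 0 ≤ i - j := by omega
    simp only [h0j, h0ij, true_and, Option.some_inj]
    rw [show (∑ c : α, (if T[j.toNat]'hjT = c then (1:ℤ) else 0) *
        (if P[(j - a).toNat]'hjP = c then 1 else 0)) =
        ∑ c : α, if T[j.toNat]'hjT = c then (if P[(j - a).toNat]'hjP = c then (1:ℤ) else 0) else 0
      from Finset.sum_congr rfl fun c _ => by split <;> simp]
    rw [Finset.sum_ite_eq]
    simp only [Finset.mem_univ, if_true]
    by_cases h : T[j.toNat]'hjT = P[(j - a).toNat]'hjP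
    · simp [h]
    · simp [h, Ne.symm h]
  -- Step 3: reindex over range m
  have hre : (∑ j ∈ Finset.Icc a i, if T[j.toNat]? = P[(j - a).toNat]? then (1:ℤ) else 0)
      = ∑ k ∈ Finset.range m, if P[k]? = (substr T a i)[k]? then (1:ℤ) else 0 := by
    refine Finset.sum_nbij' (fun j => (j - a).toNat) (fun k => a + (k:ℤ)) ?_ ?_ ?_ ?_ ?_
    · intro j hj
      simp only [Finset.mem_Icc] at hj
      simp only [Finset.mem_range]
      omega
    · intro k hk
      simp only [Finset.mem_range] at hk
      simp only [Finset.mem_Icc]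
      omega
    · intro j hj
      simp only [Finset.mem_Icc] at hj
      show a + (((j - a).toNat : ℕ) : ℤ) = j
      omega
    · intro k hk
      show ((a + (k:ℤ) - a).toNat) = k
      omega
    · intro j hj
      simp only [Finset.mem_Icc] at hj
      have h3 : (substr T a i)[(j - a).toNat]? = T[a.toNat + (j - a).toNat]? := by
        simp only [substr]
        rw [List.getElem?_take, if_pos (by omega), List.getElem?_drop]
      have h4 : a.toNat + (j - a).toNat = j.toNat := by omega
      rw [h3, h4]
      by_cases h : T[j.toNat]? = P[(j - a).toNat]?
      · simp [h]
      · simp [h, Ne.symm h]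
  rw [key, hre]
  -- Step 4: count
  have hcount : (∑ k ∈ Finset.range m, if P[k]? = (substr T a i)[k]? then (1:ℤ) else 0)
      = ((Finset.range m).filter (fun k => P[k]? = (substr T a i)[k]?)).card := by
    rw [Finset.sum_boole]
  rw [hcount]
  have hham : (hamL P (substr T a i) : ℤ)
      = ((Finset.range m).filter (fun k => ¬ P[k]? = (substr T a i)[k]?)).card := by
    congr 1
  rw [hham]
  have := Finset.card_filter_add_card_filter_not
    (s := Finset.range m) (p := fun k => P[k]? = (substr T a i)[k]?)
  simp only [Finset.card_range] at this
  omega
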